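/- Let $k$ be a field of characteristic $\neq 2$ and let $q$ be an anisotropic quadratic form over $k$ that represents $1$, with $q \simeq \langle 1 \rangle \perp q'$. Then the quadratic form $\varphi = \langle x_2 + 1, -x_2 - x_1 \rangle \perp \langle 1, -x_2 \rangle \otimes q' \perp x_1 \cdot (\langle\langle x_2 \rangle\rangle \otimes q)$ is anisotropic over $k(x_1, x_2)$. -/

import Mathlib

/-- A diagonal quadratic form (given by its diagonal entries `d`) is anisotropic. -/
def Anisotropic {F : Type*} [Field F] {ι : Type*} [Fintype ι] (d : ι → F) : Prop :=
  ∀ w : ι → F, ∑ i, d i * w i ^ 2 = 0 → w = 0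

section Helpers

theorem aniso_neg {F : Type*} [Field F] {ι : Type*} [Fintype ι] {d : ι → F}
    (h : Anisotropic d) : Anisotropic (fun i => -d i) := by
  intro w hw
  apply h w
  have : -∑ i, d i * w i ^ 2 = 0 := by
    rw [← hw, ← Finset.sum_neg_distrib]
    exact Finset.sum_congr rfl fun i _ => by ring
  exact neg_eq_zero.mp this

open Polynomial in
/-- Springer's theorem, polynomial version: if the two residue forms at `X = 0` are
anisotropic, then `∑ aᵢ wᵢ² + X ∑ bⱼ vⱼ² = 0` has only the trivial polynomial solution. -/
theorem springer_key {F : Type*} [Field F] (N : ℕ) : ∀ {ι κ : Type} [Fintype ι] [Fintype κ]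
    (a : ι → F[X]) (b : κ → F[X]),
    Anisotropic (fun i => (a i).eval 0) → Anisotropic (fun j => (b j).eval 0) →
    ∀ (w : ι → F[X]) (v : κ → F[X]),
    (∑ i, (w i).natDegree) + (∑ j, (v j).natDegree) < N →
    ∑ i, a i * w i ^ 2 + X * ∑ j, b j * v j ^ 2 = 0 →
    w = 0 ∧ v = 0 := by
  induction N with
  | zero => intro ι κ _ _ a b hA hB w v hdeg heq; omega
  | succ N ih =>
    intro ι κ _ _ a b hA hB w v hdeg heq
    -- evaluate at 0
    have h0 : ∑ i, (a i).eval 0 * ((w i).eval 0) ^ 2 = 0 := by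
      have := congrArg (Polynomial.eval 0) heq
      simpa [Polynomial.eval_finset_sum] using this
    have hw0 : ∀ i, (w i).eval 0 = 0 := fun i => congrFun (hA _ h0) i
    have hdvd : ∀ i, ∃ u, w i = X * u := by
      intro i
      have : X ∣ w i := by
        rw [Polynomial.X_dvd_iff, Polynomial.coeff_zero_eq_eval_zero]; exact hw0 i
      exact this
    choose u hu using hdvd
    have hXne : (X : F[X]) ≠ 0 := Polynomial.X_ne_zero
    have heq2 : ∑ j, b j * v j ^ 2 + X * ∑ i, a i * u i ^ 2 = 0 := by
      have : X * (∑ j, b j * v j ^ 2 + X * ∑ i, a i * u i ^ 2) = 0 := by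
        rw [← heq]; simp only [hu, mul_pow]
        rw [mul_add, ← mul_assoc, ← pow_two, add_comm]
        congr 1
        rw [Finset.mul_sum]
        exact Finset.sum_congr rfl fun i _ => by ring
      exact (mul_eq_zero.mp this).resolve_left hXne
    have hule : ∀ i, (u i).natDegree ≤ (w i).natDegree := by
      intro i
      by_cases h : u i = 0
      · simp [h]
      · rw [hu i, Polynomial.natDegree_mul hXne h, Polynomial.natDegree_X]; omega
    by_cases hw : w = 0
    · refine ⟨hw, ?_⟩
      have hu0 : ∀ i, u i = 0 := by
        intro i
        have : X * u i = 0 := by rw [← hu i, hw]; rfl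
        exact (mul_eq_zero.mp this).resolve_left hXne
      have heq3 : ∑ j, b j * v j ^ 2 = 0 := by
        simpa [hu0] using heq2
      by_cases hv : v = 0
      · exact hv
      · -- v nonzero: factor X out of v
        have h0' : ∑ j, (b j).eval 0 * ((v j).eval 0) ^ 2 = 0 := by
          have := congrArg (Polynomial.eval 0) heq3
          simpa [Polynomial.eval_finset_sum] using this
        have hv0 : ∀ j, (v j).eval 0 = 0 := fun j => congrFun (hB _ h0') j
        have hdvd' : ∀ j, ∃ t, v j = X * t := by
          intro j
          have : X ∣ v j := by
            rw [Polynomial.X_dvd_iff, Polynomial.coeff_zero_eq_eval_zero]; exact hv0 j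
          exact this
        choose t ht using hdvd'
        have heq4 : ∑ j, b j * t j ^ 2 + X * ∑ i, a i * (0 : ι → F[X]) i ^ 2 = 0 := by
          have : X ^ 2 * (∑ j, b j * t j ^ 2) = 0 := by
            rw [← heq3, Finset.mul_sum]
            exact Finset.sum_congr rfl fun j _ => by rw [ht j]; ring
          have h5 := (mul_eq_zero.mp this).resolve_left (pow_ne_zero 2 hXne)
          simpa using h5
        obtain ⟨j0, hj0⟩ : ∃ j0, v j0 ≠ 0 := by
          by_contra h; push_neg at h; exact hv (funext h)
        have hdeg' : (∑ j, (t j).natDegree) + (∑ i, ((0 : ι → F[X]) i).natDegree) < N := by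
          have hlt : ∑ j, (t j).natDegree < ∑ j, (v j).natDegree := by
            apply Finset.sum_lt_sum
            · intro j _
              by_cases h : t j = 0
              · simp [h]
              · rw [ht j, Polynomial.natDegree_mul hXne h, Polynomial.natDegree_X]; omega
            · refine ⟨j0, Finset.mem_univ _, ?_⟩
              have htne : t j0 ≠ 0 := by
                intro h; apply hj0; rw [ht j0, h, mul_zero]
              rw [ht j0, Polynomial.natDegree_mul hXne htne, Polynomial.natDegree_X]; omega
          have : ∑ j, (v j).natDegree ≤ N := by
            have : ∑ i, (w i).natDegree = 0 := by simp [hw]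
            omega
          simpa using lt_of_lt_of_le hlt this
        obtain ⟨ht0, -⟩ := ih b a hB hA t 0 hdeg' heq4
        funext j
        rw [ht j, congrFun ht0 j]; simp
    · -- w nonzero
      obtain ⟨i0, hi0⟩ : ∃ i0, w i0 ≠ 0 := by
        by_contra h; push_neg at h; exact hw (funext h)
      have hdeg' : (∑ j, (v j).natDegree) + (∑ i, (u i).natDegree) < N := by
        have hlt : ∑ i, (u i).natDegree < ∑ i, (w i).natDegree := by
          apply Finset.sum_lt_sum
          · intro i _; exact hule i
          · refine ⟨i0, Finset.mem_univ _, ?_⟩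
            have hune : u i0 ≠ 0 := by
              intro h; apply hi0; rw [hu i0, h, mul_zero]
            rw [hu i0, Polynomial.natDegree_mul hXne hune, Polynomial.natDegree_X]; omega
        omega
      obtain ⟨hv0, hu0⟩ := ih b a hB hA v u hdeg' heq2
      constructor
      · funext i; rw [hu i, congrFun hu0 i]; simp
      · exact hv0

/-- Clearing denominators: anisotropy over the fraction field follows from the
corresponding statement for the ring. -/
theorem clear_denoms {R : Type*} [CommRing R] [IsDomain R] {K : Type*} [Field K]
    [Algebra R K] [IsFractionRing R K] {ι : Type*} [Fintype ι] (D : ι → R)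
    (h : ∀ c : ι → R, ∑ i, D i * c i ^ 2 = 0 → c = 0) :
    Anisotropic (fun i => algebraMap R K (D i)) := by
  intro w hw
  obtain ⟨b, hb⟩ := IsLocalization.exist_integer_multiples (nonZeroDivisors R) Finset.univ w
  choose c hc using fun i : ι => hb i (Finset.mem_univ i)
  have hbne : algebraMap R K (b : R) ≠ 0 :=
    IsFractionRing.to_map_ne_zero_of_mem_nonZeroDivisors b.2
  have key : algebraMap R K (∑ i, D i * c i ^ 2) = 0 := by
    rw [map_sum]
    have : ∑ i, algebraMap R K (D i * c i ^ 2)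
        = algebraMap R K (b : R) ^ 2 * ∑ i, algebraMap R K (D i) * w i ^ 2 := by
      rw [Finset.mul_sum]
      refine Finset.sum_congr rfl fun i _ => ?_
      rw [map_mul, map_pow, hc i, Algebra.smul_def]
      ring
    rw [this, hw, mul_zero]
  have hc0 : (fun i => c i) = 0 := h _ ((injective_iff_map_eq_zero' _).mp
    (IsFractionRing.injective R K) _ |>.mp key)
  funext i
  have : algebraMap R K (b : R) * w i = 0 := by
    rw [← Algebra.smul_def, ← hc i, congrFun hc0 i]; simp
  rcases mul_eq_zero.mp this with h' | h'
  · exact absurd h' hbne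
  · simpa using h'

end Helpers

section Inner

open Polynomial

variable {k : Type*} [Field k] {n : ℕ}

/-- The residue form `⟨Y+1, -Y⟩ ⊥ ⟨1,-Y⟩ ⊗ q'`, polynomial version over `k[Y]`. -/
theorem innerA (q' : Fin n → k)
    (hq : Anisotropic (Fin.cons 1 q' : Fin (n + 1) → k))
    (c : (Fin 2 ⊕ Fin 2 × Fin n) → k[X])
    (hc : ∑ i, (Sum.elim ![X + 1, -X]
      (fun p : Fin 2 × Fin n => ![1, -X] p.1 * C (q' p.2)) : _ → k[X]) i * c i ^ 2 = 0) :
    c = 0 := by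
  set aK : Fin (n + 1) → k[X] := Fin.cons (X + 1) (fun j => C (q' j)) with haK
  set bK : Fin (n + 1) → k[X] := Fin.cons (-1) (fun j => -C (q' j)) with hbK
  set w : Fin (n + 1) → k[X] := Fin.cons (c (Sum.inl 0)) (fun j => c (Sum.inr (0, j))) with hwdef
  set v : Fin (n + 1) → k[X] := Fin.cons (c (Sum.inl 1)) (fun j => c (Sum.inr (1, j))) with hvdef
  have hA : Anisotropic (fun i => (aK i).eval 0) := by
    have : (fun i => (aK i).eval 0) = (Fin.cons 1 q' : Fin (n + 1) → k) := by
      funext i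
      refine Fin.cases ?_ (fun j => ?_) i <;> simp [haK]
    rw [this]; exact hq
  have hB : Anisotropic (fun i => (bK i).eval 0) := by
    have : (fun i => (bK i).eval 0) = (fun i => -(Fin.cons 1 q' : Fin (n + 1) → k) i) := by
      funext i
      refine Fin.cases ?_ (fun j => ?_) i <;> simp [hbK]
    rw [this]; exact aniso_neg hq
  have heq : ∑ i, aK i * w i ^ 2 + X * ∑ i, bK i * v i ^ 2 = 0 := by
    rw [← hc]
    simp only [haK, hbK, hwdef, hvdef, Fin.sum_univ_succ, Fin.cons_zero, Fin.cons_succ,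
      Fintype.sum_sum_type, Fintype.sum_prod_type, Fin.sum_univ_two, Matrix.cons_val_zero,
      Matrix.cons_val_one, Matrix.head_cons, Sum.elim_inl, Sum.elim_inr, Finset.mul_sum,
      Fin.succ_zero_eq_one, one_mul, neg_mul, mul_neg]
    ring_nf
    try simp only [Finset.mul_sum, mul_neg, neg_mul]
    try ring_nf
  obtain ⟨hw, hv⟩ := springer_key ((∑ i, (w i).natDegree) + (∑ j, (v j).natDegree) + 1)
    aK bK hA hB w v (Nat.lt_succ_self _) heq
  have hweval : ∀ i, w i = 0 := fun i => congrFun hw i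
  have hveval : ∀ i, v i = 0 := fun i => congrFun hv i
  funext x
  rcases x with i | p
  · fin_cases i
    · simpa [hwdef] using hweval 0
    · simpa [hvdef] using hveval 0
  · obtain ⟨p1, p2⟩ := p
    fin_cases p1
    · simpa [hwdef] using hweval p2.succ
    · simpa [hvdef] using hveval p2.succ

/-- The residue form `⟨1,Y⟩ ⊗ q`, polynomial version over `k[Y]`. -/
theorem innerB (q' : Fin n → k)
    (hq : Anisotropic (Fin.cons 1 q' : Fin (n + 1) → k))
    (c : Fin 2 × Fin (n + 1) → k[X])
    (hc : ∑ p, (![1, X] p.1 * C ((Fin.cons 1 q' : Fin (n + 1) → k) p.2)) * c p ^ 2 = 0) :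
    c = 0 := by
  set qf : Fin (n + 1) → k := Fin.cons 1 q' with hqf
  set aK : Fin (n + 1) → k[X] := fun j => C (qf j) with haK
  set w : Fin (n + 1) → k[X] := fun j => c (0, j) with hwdef
  set v : Fin (n + 1) → k[X] := fun j => c (1, j) with hvdef
  have hA : Anisotropic (fun i => (aK i).eval 0) := by
    have : (fun i => (aK i).eval 0) = qf := by funext i; simp [haK]
    rw [this]; exact hq
  have heq : ∑ i, aK i * w i ^ 2 + X * ∑ i, aK i * v i ^ 2 = 0 := by
    rw [← hc]
    simp only [haK, hwdef, hvdef, Fintype.sum_prod_type, Fin.sum_univ_two,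
      Matrix.cons_val_zero, Matrix.cons_val_one, Matrix.head_cons, Finset.mul_sum, one_mul]
    ring_nf
    try simp only [Finset.mul_sum, mul_neg, neg_mul]
    try ring_nf
  obtain ⟨hw, hv⟩ := springer_key ((∑ i, (w i).natDegree) + (∑ j, (v j).natDegree) + 1)
    aK aK hA hA w v (Nat.lt_succ_self _) heq
  funext p
  obtain ⟨p1, p2⟩ := p
  fin_cases p1
  · simpa [hwdef] using congrFun hw p2
  · simpa [hvdef] using congrFun hv p2

end Inner

section Outer

open Polynomial

variable (k : Type*) [Field k]

/-- `k[x₂] ≅ MvPolynomial (Fin 1) k`. -/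
noncomputable def psiEq : MvPolynomial (Fin 1) k ≃ₐ[k] Polynomial k :=
  (MvPolynomial.finSuccEquiv k 0).trans
    (Polynomial.mapAlgEquiv (MvPolynomial.isEmptyAlgEquiv k (Fin 0)))

/-- The field `k(x₂)`. -/
noncomputable def gHom : MvPolynomial (Fin 1) k →+* FractionRing (Polynomial k) :=
  (algebraMap (Polynomial k) (FractionRing (Polynomial k))).comp (psiEq k).toAlgHom.toRingHom

/-- `k[x₁,x₂] → k(x₂)[x₁]`, coefficientwise. -/
noncomputable def phiHom : MvPolynomial (Fin 2) k →+* Polynomial (FractionRing (Polynomial k)) :=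
  (Polynomial.mapRingHom (gHom k)).comp (MvPolynomial.finSuccEquiv k 1).toAlgHom.toRingHom

/-- `x₂ ∈ k(x₂)`. -/
noncomputable def yF : FractionRing (Polynomial k) := algebraMap (Polynomial k) _ X

/-- `k → k(x₂)`. -/
noncomputable def cf {k : Type*} [Field k] (a : k) : FractionRing (Polynomial k) :=
  algebraMap (Polynomial k) _ (C a)

theorem phiHom_injective : Function.Injective (phiHom k) := by
  unfold phiHom
  rw [RingHom.coe_comp]
  exact Function.Injective.comp
    (Polynomial.map_injective _
      ((IsFractionRing.injective (Polynomial k) (FractionRing (Polynomial k))).comp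
        (psiEq k).injective))
    (MvPolynomial.finSuccEquiv k 1).injective

theorem phiHom_X0 : phiHom k (MvPolynomial.X 0) = X := by
  simp [phiHom, MvPolynomial.finSuccEquiv_X_zero]

theorem phiHom_X1 : phiHom k (MvPolynomial.X 1) = C (yF k) := by
  have h1 : (MvPolynomial.finSuccEquiv k 1) (MvPolynomial.X 1)
      = Polynomial.C (MvPolynomial.X 0) := by
    have : (1 : Fin 2) = Fin.succ 0 := rfl
    rw [this, MvPolynomial.finSuccEquiv_X_succ]
  have h2 : (psiEq k) (MvPolynomial.X 0) = X := by
    simp [psiEq, MvPolynomial.finSuccEquiv_X_zero]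
  simp [phiHom, h1, gHom, yF, h2]

theorem phiHom_C (a : k) : phiHom k (MvPolynomial.C a) = C (cf a) := by
  have h1 : (MvPolynomial.finSuccEquiv k 1) (MvPolynomial.C a)
      = Polynomial.C (MvPolynomial.C a) := by
    simp [MvPolynomial.finSuccEquiv_apply]
  have h2 : (psiEq k) (MvPolynomial.C a) = C a := by
    simp [psiEq, MvPolynomial.finSuccEquiv_apply, Polynomial.coe_mapAlgEquiv, MvPolynomial.coeff_zero_C]
    exact (MvPolynomial.coeff_C _ _).trans (if_pos (Subsingleton.elim _ _))
  simp [phiHom, h1, gHom, cf, h2]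

variable {k} {n : ℕ}

/-- The first residue form is anisotropic over `k(x₂)`. -/
theorem residueA (q' : Fin n → k) (hq : Anisotropic (Fin.cons 1 q' : Fin (n + 1) → k)) :
    Anisotropic (Sum.elim ![yF k + 1, -yF k]
      (fun p : Fin 2 × Fin n => ![1, -yF k] p.1 * cf (q' p.2))) := by
  have h := clear_denoms (K := FractionRing (Polynomial k))
    (Sum.elim ![X + 1, -X] (fun p : Fin 2 × Fin n => ![1, -X] p.1 * C (q' p.2)))
    (fun c hc => innerA q' hq c hc)
  have he : (Sum.elim ![yF k + 1, -yF k]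
        (fun p : Fin 2 × Fin n => ![1, -yF k] p.1 * cf (q' p.2)))
      = fun i => algebraMap (Polynomial k) (FractionRing (Polynomial k))
        ((Sum.elim ![X + 1, -X]
          (fun p : Fin 2 × Fin n => ![1, -X] p.1 * C (q' p.2))) i) := by
    funext x
    rcases x with i | p
    · fin_cases i <;> simp [yF, map_add, map_one, map_neg]
    · obtain ⟨p1, p2⟩ := p
      fin_cases p1 <;> simp [yF, cf, map_mul, map_neg, map_one] <;> exact mul_comm _ _
  rw [he]; exact h

/-- The second residue form is anisotropic over `k(x₂)`. -/
theorem residueB (q' : Fin n → k) (hq : Anisotropic (Fin.cons 1 q' : Fin (n + 1) → k)) :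
    Anisotropic (fun p : Fin 2 × Fin (n + 1) =>
      ![1, yF k] p.1 * cf ((Fin.cons 1 q' : Fin (n + 1) → k) p.2)) := by
  have h := clear_denoms (K := FractionRing (Polynomial k))
    (fun p : Fin 2 × Fin (n + 1) => ![1, X] p.1 * C ((Fin.cons 1 q' : Fin (n + 1) → k) p.2))
    (fun c hc => innerB q' hq c hc)
  have he : (fun p : Fin 2 × Fin (n + 1) =>
        ![1, yF k] p.1 * cf ((Fin.cons 1 q' : Fin (n + 1) → k) p.2))
      = fun p => algebraMap (Polynomial k) (FractionRing (Polynomial k))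
        (![1, X] p.1 * C ((Fin.cons 1 q' : Fin (n + 1) → k) p.2)) := by
    funext p
    obtain ⟨p1, p2⟩ := p
    fin_cases p1 <;> simp [yF, cf, map_mul, map_one] <;> exact mul_comm _ _
  rw [he]; exact h

end Outer

section OuterKey

open Polynomial

variable {k : Type*} [Field k] {n : ℕ}

set_option maxHeartbeats 1000000 in
set_option synthInstance.maxHeartbeats 1000000 in
/-- The full form, polynomial version over `k[x₁,x₂]`. -/
theorem outerPoly (q' : Fin n → k) (hq : Anisotropic (Fin.cons 1 q' : Fin (n + 1) → k))
    (c : (Fin 2 ⊕ (Fin 2 × Fin n ⊕ Fin 2 × Fin (n + 1))) → MvPolynomial (Fin 2) k)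
    (hc : ∑ i, (Sum.elim ![MvPolynomial.X 1 + 1, -MvPolynomial.X 1 - MvPolynomial.X 0]
      (Sum.elim
        (fun p : Fin 2 × Fin n => ![1, -MvPolynomial.X 1] p.1 * MvPolynomial.C (q' p.2))
        (fun p : Fin 2 × Fin (n + 1) => MvPolynomial.X 0 * ![1, MvPolynomial.X 1] p.1 *
          MvPolynomial.C ((Fin.cons 1 q' : Fin (n + 1) → k) p.2)))) i * c i ^ 2 = 0) :
    c = 0 := by
  set φ := phiHom k with hφdef
  set a : (Fin 2 ⊕ Fin 2 × Fin n) → (FractionRing (Polynomial k))[X] :=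
    Sum.elim ![C (yF k + 1), C (-yF k) - X]
      (fun p => C (![1, -yF k] p.1 * cf (q' p.2))) with hadef
  set b : Fin 2 × Fin (n + 1) → (FractionRing (Polynomial k))[X] :=
    fun p => C (![1, yF k] p.1 * cf ((Fin.cons 1 q' : Fin (n + 1) → k) p.2)) with hbdef
  set w : (Fin 2 ⊕ Fin 2 × Fin n) → (FractionRing (Polynomial k))[X] :=
    Sum.elim (fun i : Fin 2 => φ (c (Sum.inl i)))
      (fun p : Fin 2 × Fin n => φ (c (Sum.inr (Sum.inl p)))) with hwdef
  set v : Fin 2 × Fin (n + 1) → (FractionRing (Polynomial k))[X] :=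
    fun p => φ (c (Sum.inr (Sum.inr p))) with hvdef
  -- coefficient computations
  have e1 : ∀ i : Fin 2,
      φ ((![MvPolynomial.X 1 + 1, -MvPolynomial.X 1 - MvPolynomial.X 0] :
        Fin 2 → MvPolynomial (Fin 2) k) i) = a (Sum.inl i) := by
    intro i; fin_cases i
    · show φ (MvPolynomial.X 1 + 1) = a (Sum.inl 0)
      rw [map_add, map_one, phiHom_X1]
      simp only [hadef, Sum.elim_inl, Matrix.cons_val_zero]
      rw [C_add, C_1]
    · show φ (-MvPolynomial.X 1 - MvPolynomial.X 0) = a (Sum.inl 1)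
      rw [map_sub, map_neg, phiHom_X1, phiHom_X0]
      simp only [hadef, Sum.elim_inl, Matrix.cons_val_one, Matrix.head_cons, Matrix.cons_val_zero]
      rw [C_neg]
  have e2 : ∀ p : Fin 2 × Fin n,
      φ ((![1, -MvPolynomial.X 1] : Fin 2 → MvPolynomial (Fin 2) k) p.1
        * MvPolynomial.C (q' p.2)) = a (Sum.inr p) := by
    intro p; obtain ⟨p1, p2⟩ := p; fin_cases p1
    · show φ (1 * MvPolynomial.C (q' p2)) = a (Sum.inr (0, p2))
      rw [one_mul, phiHom_C]
      simp only [hadef, Sum.elim_inr, Matrix.cons_val_zero]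
      rw [one_mul]
    · show φ (-MvPolynomial.X 1 * MvPolynomial.C (q' p2)) = a (Sum.inr (1, p2))
      rw [map_mul, map_neg, phiHom_X1, phiHom_C]
      simp only [hadef, Sum.elim_inr, Matrix.cons_val_one, Matrix.head_cons, Matrix.cons_val_zero]
      rw [C_mul, C_neg]
  have e3 : ∀ p : Fin 2 × Fin (n + 1),
      φ (MvPolynomial.X 0 * (![1, MvPolynomial.X 1] : Fin 2 → MvPolynomial (Fin 2) k) p.1
        * MvPolynomial.C ((Fin.cons 1 q' : Fin (n + 1) → k) p.2)) = X * b p := by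
    intro p; obtain ⟨p1, p2⟩ := p; fin_cases p1
    · show φ (MvPolynomial.X 0 * 1 * MvPolynomial.C _) = X * b (0, p2)
      rw [mul_one, map_mul, phiHom_X0, phiHom_C]
      simp only [hbdef, Matrix.cons_val_zero]
      rw [one_mul]
    · show φ (MvPolynomial.X 0 * MvPolynomial.X 1 * MvPolynomial.C _) = X * b (1, p2)
      rw [map_mul, map_mul, phiHom_X0, phiHom_X1, phiHom_C]
      simp only [hbdef, Matrix.cons_val_one, Matrix.head_cons, Matrix.cons_val_zero]
      rw [C_mul, mul_assoc]
  -- map the equation through φ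
  have hφ := congrArg φ hc
  rw [map_sum, map_zero] at hφ
  simp only [map_mul, map_pow] at hφ
  simp only [Fintype.sum_sum_type, Sum.elim_inl, Sum.elim_inr] at hφ
  simp only [e1, e2, e3] at hφ
  have heqF : ∑ i, a i * w i ^ 2 + X * ∑ p, b p * v p ^ 2 = 0 := by
    rw [← hφ]
    simp only [hwdef, hvdef, Fintype.sum_sum_type, Sum.elim_inl, Sum.elim_inr,
      Finset.mul_sum, mul_assoc]
    ring
  -- residue forms
  have hA : Anisotropic (fun i => (a i).eval 0) := by
    have : (fun i => (a i).eval 0) = Sum.elim ![yF k + 1, -yF k]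
        (fun p : Fin 2 × Fin n => ![1, -yF k] p.1 * cf (q' p.2)) := by
      funext x
      rcases x with i | p
      · fin_cases i <;>
          simp [hadef, eval_add, eval_sub, eval_C, eval_X, eval_one]
      · obtain ⟨p1, p2⟩ := p
        fin_cases p1 <;>
          simp [hadef, Sum.elim_inr, Matrix.cons_val_zero, Matrix.cons_val_one,
            Matrix.head_cons, Fin.mk_one, eval_C]
    rw [this]; exact residueA q' hq
  have hB : Anisotropic (fun p => (b p).eval 0) := by
    have : (fun p => (b p).eval 0) = fun p : Fin 2 × Fin (n + 1) =>
        ![1, yF k] p.1 * cf ((Fin.cons 1 q' : Fin (n + 1) → k) p.2) := by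
      funext p; simp [hbdef, eval_C]
    rw [this]; exact residueB q' hq
  obtain ⟨hw, hv⟩ := springer_key ((∑ i, (w i).natDegree) + (∑ j, (v j).natDegree) + 1)
    a b hA hB w v (Nat.lt_succ_self _) heqF
  funext x
  rw [Pi.zero_apply]
  apply phiHom_injective k
  rw [map_zero]
  rcases x with i | p
  · exact congrFun hw (Sum.inl i)
  · rcases p with p | p
    · exact congrFun hw (Sum.inr p)
    · exact congrFun hv p

end OuterKey

noncomputable section

/-- The field `k(x₁, x₂)`. -/
abbrev K2 (k : Type*) [Field k] := FractionRing (MvPolynomial (Fin 2) k)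

/-- The variable `xᵢ` in `k(x₁, x₂)`. -/
def xv {k : Type*} [Field k] (i : Fin 2) : K2 k :=
  algebraMap (MvPolynomial (Fin 2) k) (K2 k) (MvPolynomial.X i)

/-- The inclusion of constants `k → k(x₁, x₂)`. -/
def cst {k : Type*} [Field k] (a : k) : K2 k :=
  algebraMap (MvPolynomial (Fin 2) k) (K2 k) (MvPolynomial.C a)

set_option maxHeartbeats 1000000 in
set_option synthInstance.maxHeartbeats 1000000 in
/-- let `q ≃ ⟨1⟩ ⊥ q'` be anisotropic over `k` (char ≠ 2), representing 1.
Then `φ = ⟨x₂ + 1, -x₂ - x₁⟩ ⊥ ⟨1, -x₂⟩ ⊗ q' ⊥ x₁ · (⟨⟨x₂⟩⟩ ⊗ q)` is anisotropic over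
`k(x₁, x₂)`. -/
theorem phi_anisotropic_over_k_x1_x2
    {k : Type*} [Field k] (hk : (2 : k) ≠ 0) {n : ℕ} (q' : Fin n → k)
    (hq : Anisotropic (Fin.cons 1 q' : Fin (n + 1) → k)) :
    Anisotropic (Sum.elim
      (![xv (k := k) 1 + 1, -xv 1 - xv 0])
      (Sum.elim
        (fun p : Fin 2 × Fin n => ![(1 : K2 k), -xv 1] p.1 * cst (q' p.2))
        (fun p : Fin 2 × Fin (n + 1) =>
          xv 0 * ![(1 : K2 k), xv 1] p.1 * cst ((Fin.cons 1 q' : Fin (n + 1) → k) p.2)))) := by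
  have h := clear_denoms (K := K2 k)
    (Sum.elim ![MvPolynomial.X 1 + 1, -MvPolynomial.X 1 - MvPolynomial.X 0]
      (Sum.elim
        (fun p : Fin 2 × Fin n => ![1, -MvPolynomial.X 1] p.1 * MvPolynomial.C (q' p.2))
        (fun p : Fin 2 × Fin (n + 1) => MvPolynomial.X 0 * ![1, MvPolynomial.X 1] p.1 *
          MvPolynomial.C ((Fin.cons 1 q' : Fin (n + 1) → k) p.2))))
    (fun c hc => outerPoly q' hq c hc)
  have he : (Sum.elim
      (![xv (k := k) 1 + 1, -xv 1 - xv 0])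
      (Sum.elim
        (fun p : Fin 2 × Fin n => ![(1 : K2 k), -xv 1] p.1 * cst (q' p.2))
        (fun p : Fin 2 × Fin (n + 1) =>
          xv 0 * ![(1 : K2 k), xv 1] p.1 * cst ((Fin.cons 1 q' : Fin (n + 1) → k) p.2))))
      = fun i => algebraMap (MvPolynomial (Fin 2) k) (K2 k)
        ((Sum.elim ![MvPolynomial.X 1 + 1, -MvPolynomial.X 1 - MvPolynomial.X 0]
          (Sum.elim
            (fun p : Fin 2 × Fin n => ![1, -MvPolynomial.X 1] p.1 * MvPolynomial.C (q' p.2))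
            (fun p : Fin 2 × Fin (n + 1) => MvPolynomial.X 0 * ![1, MvPolynomial.X 1] p.1 *
              MvPolynomial.C ((Fin.cons 1 q' : Fin (n + 1) → k) p.2)))) i) := by
    funext x
    rcases x with i | p
    · fin_cases i <;> simp [xv, map_add, map_one, map_sub, map_neg]
    · rcases p with ⟨p1, p2⟩ | ⟨p1, p2⟩ <;> fin_cases p1 <;>
        simp [xv, cst, map_mul, map_neg, map_one]
  rw [he]
  exact h

end
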